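/- Let (b_n)_{n\ge 1} and (c_n)_{n\ge 1} be complex sequences with b_1 = c_1 = 1 which are multiplicative (b_{mn} = b_m b_n and c_{mn} = c_m c_n whenever gcd(m,n) = 1) and satisfy, for every prime p and every integer j \ge 0, the recursions b_{p^{j+1}} = b_p b_{p^j} - c_p b_{p^{j-1}} + b_{p^{j-2}} and c_{p^{j+1}} = c_p c_{p^j} - b_p c_{p^{j-1}} + c_{p^{j-2}}, where any term whose subscript has a negative exponent is interpreted as 0. Define a_{r,s} = \sum_{d | gcd(r,s)} \mu(d) c_{r/d} b_{s/d} for r, s \ge 1. Then for every prime p and all r, s \ge 1: b_p a_{r,s} = a_{r/p, s} + a_{rp, s/p} + a_{r, sp} and c_p a_{r,s} = a_{r, s/p} + a_{r/p, sp} + a_{rp, s}, where on the right-hand sides any term whose subscript r/p or s/p is not an integer is omitted. -/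

import Mathlib

open Finset ArithmeticFunction
open scoped ArithmeticFunction.Moebius

noncomputable def AlocHecke (b c : ℕ → ℂ) (p α β : ℕ) : ℂ :=
  c (p ^ α) * b (p ^ β) - (if 1 ≤ α ∧ 1 ≤ β then c (p ^ (α - 1)) * b (p ^ (β - 1)) else 0)

lemma AlocHecke_swap (b c : ℕ → ℂ) (p x y : ℕ) :
    AlocHecke c b p y x = AlocHecke b c p x y := by
  unfold AlocHecke
  by_cases h : 1 ≤ x ∧ 1 ≤ y
  · rw [if_pos (⟨h.2, h.1⟩ : 1 ≤ y ∧ 1 ≤ x), if_pos h]; ring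
  · rw [if_neg (fun hh => h ⟨hh.2, hh.1⟩), if_neg h]; ring

lemma coreHecke (b c : ℕ → ℂ) (hb1 : b 1 = 1) (hc1 : c 1 = 1) (p : ℕ)
    (hbrec : ∀ j : ℕ,
      b (p ^ (j + 1)) = b p * b (p ^ j) - c p * (if 1 ≤ j then b (p ^ (j - 1)) else 0)
        + (if 2 ≤ j then b (p ^ (j - 2)) else 0))
    (hcrec : ∀ j : ℕ,
      c (p ^ (j + 1)) = c p * c (p ^ j) - b p * (if 1 ≤ j then c (p ^ (j - 1)) else 0)
        + (if 2 ≤ j then c (p ^ (j - 2)) else 0))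
    (α β : ℕ) :
    b p * AlocHecke b c p α β =
      (if 1 ≤ α then AlocHecke b c p (α - 1) β else 0) +
      (if 1 ≤ β then AlocHecke b c p (α + 1) (β - 1) else 0) +
      AlocHecke b c p α (β + 1) := by
  match α, β with
  | 0, 0 => simp [AlocHecke, hb1, hc1, hbrec 0, hcrec 0, pow_one]
  | 0, 1 => simp [AlocHecke, hb1, hc1, hbrec 0, hbrec 1, pow_one]
  | 0, (β+2) =>
      have h1 := hbrec (β+2)
      simp only [show (1:ℕ) ≤ β+2 by omega, show (2:ℕ) ≤ β+2 by omega, if_true] at h1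
      simp [AlocHecke, hb1, hc1, h1]
  | 1, 0 => simp [AlocHecke, hb1, hc1, pow_one]; ring
  | (α+2), 0 => simp [AlocHecke, hb1, hc1]; ring
  | 1, 1 =>
      have h1 := hbrec 1; have h2 := hcrec 1
      simp only [le_refl, if_true] at h1 h2
      simp [AlocHecke, hb1, hc1, h1, h2, pow_one]; ring
  | 1, (β+2) =>
      have h1 := hbrec (β+2); have h2 := hcrec 1
      simp only [show (1:ℕ) ≤ β+2 by omega, show (2:ℕ) ≤ β+2 by omega, le_refl, if_true] at h1 h2
      simp [AlocHecke, hb1, hc1, h1, h2]; ring_nf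
  | (α+2), 1 =>
      have h1 := hbrec 1; have h2 := hcrec (α+2)
      simp only [show (1:ℕ) ≤ α+2 by omega, show (2:ℕ) ≤ α+2 by omega, le_refl, if_true] at h1 h2
      simp [AlocHecke, hb1, hc1, h1, h2]; ring
  | (α+2), (β+2) =>
      have h1 := hbrec (β+2); have h2 := hcrec (α+2)
      simp only [show (1:ℕ) ≤ β+2 by omega, show (2:ℕ) ≤ β+2 by omega,
        show (1:ℕ) ≤ α+2 by omega, show (2:ℕ) ≤ α+2 by omega, if_true] at h1 h2
      simp [AlocHecke, h1, h2]; ring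

lemma sum_divisors_coprime_mul_hecke {u v : ℕ} (h : Nat.Coprime u v) (f : ℕ → ℂ) :
    ∑ d ∈ (u * v).divisors, f d = ∑ i ∈ u.divisors, ∑ j ∈ v.divisors, f (i * j) := by
  rw [← Finset.sum_product']
  refine (Finset.sum_nbij' (fun p => p.1 * p.2) (fun d => (d.gcd u, d.gcd v)) ?_ ?_ ?_ ?_ ?_).symm
  · rintro ⟨i, j⟩ hij
    simp only [Finset.mem_product, Nat.mem_divisors] at hij ⊢
    exact ⟨mul_dvd_mul hij.1.1 hij.2.1, mul_ne_zero hij.1.2 hij.2.2⟩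
  · intro d hd
    simp only [Nat.mem_divisors, Finset.mem_product] at hd ⊢
    have hu : u ≠ 0 := fun h0 => hd.2 (by simp [h0])
    have hv : v ≠ 0 := fun h0 => hd.2 (by simp [h0])
    exact ⟨⟨Nat.gcd_dvd_right _ _, hu⟩, ⟨Nat.gcd_dvd_right _ _, hv⟩⟩
  · rintro ⟨i, j⟩ hij
    simp only [Finset.mem_product, Nat.mem_divisors] at hij
    have hju : Nat.Coprime j u := (h.symm.coprime_dvd_left hij.2.1)
    have hiv : Nat.Coprime i v := (h.coprime_dvd_left hij.1.1)
    have e1 : (i * j).gcd u = i := by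
      rw [hju.gcd_mul_right_cancel, Nat.gcd_eq_left hij.1.1]
    have e2 : (i * j).gcd v = j := by
      rw [hiv.gcd_mul_left_cancel, Nat.gcd_eq_left hij.2.1]
    simp [e1, e2]
  · intro d hd
    simp only [Nat.mem_divisors] at hd
    exact Nat.gcd_mul_gcd_eq_iff_dvd_mul_of_coprime h |>.mpr hd.1
  · rintro ⟨i, j⟩ _; rfl

lemma gcd_pow_mul_hecke {p : ℕ} (hp : p.Prime) {m n : ℕ} (hm : ¬ p ∣ m) (hn : ¬ p ∣ n)
    (α β : ℕ) :
    Nat.gcd (p ^ α * m) (p ^ β * n) = p ^ (min α β) * Nat.gcd m n := by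
  have key : ∀ a b : ℕ, a ≤ b → ∀ m n : ℕ, ¬ p ∣ m → ¬ p ∣ n →
      Nat.gcd (p ^ a * m) (p ^ b * n) = p ^ a * Nat.gcd m n := by
    intro a b hab m n hm hn
    have : p ^ b = p ^ a * p ^ (b - a) := by rw [← pow_add]; congr 1; omega
    rw [this, mul_assoc, Nat.gcd_mul_left]
    congr 1
    have hcop : Nat.Coprime (p ^ (b - a)) m :=
      Nat.Coprime.pow_left _ ((hp.coprime_iff_not_dvd).mpr hm)
    exact hcop.gcd_mul_left_cancel_right n
  rcases le_total α β with hab | hab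
  · rw [key α β hab m n hm hn, min_eq_left hab]
  · rw [Nat.gcd_comm, key β α hab n m hn hm, min_eq_right hab, Nat.gcd_comm]

lemma Tsum_hecke (b c : ℕ → ℂ) {p : ℕ} (hp : p.Prime) (α β : ℕ) :
    ∑ k ∈ range (min α β + 1), ((μ (p ^ k) : ℤ) : ℂ) * c (p ^ (α - k)) * b (p ^ (β - k))
      = AlocHecke b c p α β := by
  rcases Nat.eq_zero_or_pos (min α β) with h0 | h1
  · have hc : ¬(1 ≤ α ∧ 1 ≤ β) := by omega
    rw [h0, Finset.sum_range_one]
    simp [AlocHecke, hc]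
  · have hc : (1 ≤ α ∧ 1 ≤ β) := by omega
    have hsub : range 2 ⊆ range (min α β + 1) := by rw [range_subset_range]; omega
    rw [← Finset.sum_subset hsub (fun k _ hk2 => ?_)]
    · rw [Finset.sum_range_succ, Finset.sum_range_one,
        moebius_apply_prime_pow hp one_ne_zero]
      simp [AlocHecke, hc]
      ring
    · rw [Finset.mem_range, not_lt] at hk2
      rw [moebius_apply_prime_pow hp (by omega), if_neg (by omega)]
      simp

lemma a_factor_hecke (b c : ℕ → ℂ)
    (hbmul : ∀ m n : ℕ, Nat.Coprime m n → b (m * n) = b m * b n)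
    (hcmul : ∀ m n : ℕ, Nat.Coprime m n → c (m * n) = c m * c n)
    {p : ℕ} (hp : p.Prime) {m n : ℕ} (hm : ¬ p ∣ m) (hn : ¬ p ∣ n) (α β : ℕ) :
    ∑ d ∈ (Nat.gcd (p ^ α * m) (p ^ β * n)).divisors,
        ((μ d : ℤ) : ℂ) * c ((p ^ α * m) / d) * b ((p ^ β * n) / d)
      = AlocHecke b c p α β *
        ∑ j ∈ (Nat.gcd m n).divisors, ((μ j : ℤ) : ℂ) * c (m / j) * b (n / j) := by
  have hpg : ¬ p ∣ Nat.gcd m n := fun h => hm (h.trans (Nat.gcd_dvd_left m n))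
  have hco : Nat.Coprime (p ^ (min α β)) (Nat.gcd m n) :=
    Nat.Coprime.pow_left _ ((hp.coprime_iff_not_dvd).mpr hpg)
  rw [gcd_pow_mul_hecke hp hm hn, sum_divisors_coprime_mul_hecke hco,
    Nat.sum_divisors_prime_pow hp, ← Tsum_hecke b c hp α β, Finset.sum_mul_sum]
  refine Finset.sum_congr rfl fun k hk => Finset.sum_congr rfl fun j hj => ?_
  rw [Finset.mem_range] at hk
  rw [Nat.mem_divisors] at hj
  have hkα : k ≤ α := by omega
  have hkβ : k ≤ β := by omega
  have hjm : j ∣ m := hj.1.trans (Nat.gcd_dvd_left m n)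
  have hjn : j ∣ n := hj.1.trans (Nat.gcd_dvd_right m n)
  have hpj : Nat.Coprime (p ^ k) j :=
    Nat.Coprime.pow_left _ ((hp.coprime_iff_not_dvd).mpr (fun h => hm (h.trans hjm)))
  have hmu : μ (p ^ k * j) = μ (p ^ k) * μ j := isMultiplicative_moebius.map_mul_of_coprime hpj
  have hdiv1 : (p ^ α * m) / (p ^ k * j) = p ^ (α - k) * (m / j) := by
    rw [← Nat.div_mul_div_comm (pow_dvd_pow p hkα) hjm, Nat.pow_div hkα hp.pos]
  have hdiv2 : (p ^ β * n) / (p ^ k * j) = p ^ (β - k) * (n / j) := by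
    rw [← Nat.div_mul_div_comm (pow_dvd_pow p hkβ) hjn, Nat.pow_div hkβ hp.pos]
  have hmjm : m / j ∣ m := ⟨j, (Nat.div_mul_cancel hjm).symm⟩
  have hnjn : n / j ∣ n := ⟨j, (Nat.div_mul_cancel hjn).symm⟩
  have hcop1 : Nat.Coprime (p ^ (α - k)) (m / j) :=
    Nat.Coprime.pow_left _ ((hp.coprime_iff_not_dvd).mpr (fun h => hm (h.trans hmjm)))
  have hcop2 : Nat.Coprime (p ^ (β - k)) (n / j) :=
    Nat.Coprime.pow_left _ ((hp.coprime_iff_not_dvd).mpr (fun h => hn (h.trans hnjn)))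
  rw [hdiv1, hdiv2, hcmul _ _ hcop1, hbmul _ _ hcop2, hmu]
  push_cast
  ring

theorem hecke_four_term_relations
    (b c : ℕ → ℂ) (hb1 : b 1 = 1) (hc1 : c 1 = 1)
    (hbmul : ∀ m n : ℕ, Nat.Coprime m n → b (m * n) = b m * b n)
    (hcmul : ∀ m n : ℕ, Nat.Coprime m n → c (m * n) = c m * c n)
    (hbrec : ∀ p : ℕ, p.Prime → ∀ j : ℕ,
      b (p ^ (j + 1)) = b p * b (p ^ j) - c p * (if 1 ≤ j then b (p ^ (j - 1)) else 0)
        + (if 2 ≤ j then b (p ^ (j - 2)) else 0))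
    (hcrec : ∀ p : ℕ, p.Prime → ∀ j : ℕ,
      c (p ^ (j + 1)) = c p * c (p ^ j) - b p * (if 1 ≤ j then c (p ^ (j - 1)) else 0)
        + (if 2 ≤ j then c (p ^ (j - 2)) else 0))
    (a : ℕ → ℕ → ℂ)
    (ha : ∀ r s : ℕ, a r s = ∑ d ∈ (Nat.gcd r s).divisors,
      ((ArithmeticFunction.moebius d : ℤ) : ℂ) * c (r / d) * b (s / d)) :
    ∀ p : ℕ, p.Prime → ∀ r s : ℕ, 1 ≤ r → 1 ≤ s →
      (b p * a r s =
        (if p ∣ r then a (r / p) s else 0) + (if p ∣ s then a (r * p) (s / p) else 0)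
          + a r (s * p)) ∧
      (c p * a r s =
        (if p ∣ s then a r (s / p) else 0) + (if p ∣ r then a (r / p) (s * p) else 0)
          + a (r * p) s) := by
  intro p hp r s hr hs
  have hr0 : r ≠ 0 := by omega
  have hs0 : s ≠ 0 := by omega
  obtain ⟨α, m, hm, hrm⟩ : ∃ α m : ℕ, ¬ p ∣ m ∧ p ^ α * m = r :=
    ⟨_, _, Nat.not_dvd_ordCompl hp hr0, Nat.ordProj_mul_ordCompl_eq_self r p⟩
  obtain ⟨β, n, hn, hsn⟩ : ∃ β n : ℕ, ¬ p ∣ n ∧ p ^ β * n = s :=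
    ⟨_, _, Nat.not_dvd_ordCompl hp hs0, Nat.ordProj_mul_ordCompl_eq_self s p⟩
  have hpr : p ∣ r ↔ 1 ≤ α := by
    constructor
    · intro h
      by_contra h0
      have hα0 : α = 0 := by omega
      subst hα0
      rw [pow_zero, one_mul] at hrm
      exact hm (hrm ▸ h)
    · intro h1
      exact dvd_trans (dvd_pow_self p (by omega : α ≠ 0)) (hrm ▸ Dvd.intro m rfl)
  have hps : p ∣ s ↔ 1 ≤ β := by
    constructor
    · intro h
      by_contra h0
      have hβ0 : β = 0 := by omega
      subst hβ0
      rw [pow_zero, one_mul] at hsn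
      exact hn (hsn ▸ h)
    · intro h1
      exact dvd_trans (dvd_pow_self p (by omega : β ≠ 0)) (hsn ▸ Dvd.intro n rfl)
  set S := ∑ j ∈ (Nat.gcd m n).divisors, ((μ j : ℤ) : ℂ) * c (m / j) * b (n / j) with hS
  have key : ∀ x y : ℕ, a (p ^ x * m) (p ^ y * n) = AlocHecke b c p x y * S := fun x y => by
    rw [ha]; exact a_factor_hecke b c hbmul hcmul hp hm hn x y
  have e0 : a r s = AlocHecke b c p α β * S := by rw [← hrm, ← hsn]; exact key α β
  have erp : r * p = p ^ (α + 1) * m := by rw [← hrm]; ring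
  have esp : s * p = p ^ (β + 1) * n := by rw [← hsn]; ring
  have erd : 1 ≤ α → r / p = p ^ (α - 1) * m := by
    intro h1
    have : r = p * (p ^ (α - 1) * m) := by
      rw [← hrm, ← mul_assoc, ← pow_succ']
      congr 2
      omega
    rw [this, Nat.mul_div_cancel_left _ hp.pos]
  have esd : 1 ≤ β → s / p = p ^ (β - 1) * n := by
    intro h1
    have : s = p * (p ^ (β - 1) * n) := by
      rw [← hsn, ← mul_assoc, ← pow_succ']
      congr 2
      omega
    rw [this, Nat.mul_div_cancel_left _ hp.pos]
  have ifr1 : (if p ∣ r then a (r / p) s else 0)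
      = (if 1 ≤ α then AlocHecke b c p (α - 1) β else 0) * S := by
    by_cases h : p ∣ r
    · rw [if_pos h, if_pos (hpr.mp h), erd (hpr.mp h), ← hsn, key]
    · rw [if_neg h, if_neg (fun hh => h (hpr.mpr hh)), zero_mul]
  have ifs1 : (if p ∣ s then a (r * p) (s / p) else 0)
      = (if 1 ≤ β then AlocHecke b c p (α + 1) (β - 1) else 0) * S := by
    by_cases h : p ∣ s
    · rw [if_pos h, if_pos (hps.mp h), esd (hps.mp h), erp, key]
    · rw [if_neg h, if_neg (fun hh => h (hps.mpr hh)), zero_mul]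
  have ifs2 : (if p ∣ s then a r (s / p) else 0)
      = (if 1 ≤ β then AlocHecke b c p α (β - 1) else 0) * S := by
    by_cases h : p ∣ s
    · rw [if_pos h, if_pos (hps.mp h), esd (hps.mp h), ← hrm, key]
    · rw [if_neg h, if_neg (fun hh => h (hps.mpr hh)), zero_mul]
  have ifr2 : (if p ∣ r then a (r / p) (s * p) else 0)
      = (if 1 ≤ α then AlocHecke b c p (α - 1) (β + 1) else 0) * S := by
    by_cases h : p ∣ r
    · rw [if_pos h, if_pos (hpr.mp h), erd (hpr.mp h), esp, key]
    · rw [if_neg h, if_neg (fun hh => h (hpr.mpr hh)), zero_mul]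
  have e3 : a r (s * p) = AlocHecke b c p α (β + 1) * S := by
    rw [← hrm, esp]; exact key α (β + 1)
  have e4 : a (r * p) s = AlocHecke b c p (α + 1) β * S := by
    rw [erp, ← hsn]; exact key (α + 1) β
  constructor
  · rw [e0, ifr1, ifs1, e3, ← mul_assoc,
      coreHecke b c hb1 hc1 p (hbrec p hp) (hcrec p hp) α β]
    ring
  · have core2 := coreHecke c b hc1 hb1 p (hcrec p hp) (hbrec p hp) β α
    simp only [AlocHecke_swap] at core2
    rw [e0, ifs2, ifr2, e4, ← mul_assoc, core2]
    ring
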